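/- Let q, x ∈ ℂ with |q| < 1, |x·q| < 1 and |x^{−1}·q| < 1. Then the two series below converge absolutely and exp( −∑_{m≥1} x^m·q^m/(m·(1 − q^m)²) − ∑_{m≥1} x^{−m}·q^m/(m·(1 − q^m)²) ) = ∏_{k≥1} (1 − x·q^k)^{k} · ∏_{k≥1} (1 − x^{−1}·q^k)^{k}, where both infinite products converge absolutely. -/

import Mathlib

open Complex MeasureTheory Filter Topology

/-- The integral of `g` along the real axis with a semicircular detour of
radius `r` above the origin. -/
noncomputable def contourIntegral (r : ℝ) (g : ℂ → ℂ) : ℂ :=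
  (∫ x : ℝ in Set.Iic (-r), g (x : ℂ)) +
  (∫ θ : ℝ in (0:ℝ)..Real.pi,
      g ((r : ℂ) * Complex.exp (Complex.I * ((Real.pi : ℂ) - (θ : ℂ)))) *
        (-Complex.I * (r : ℂ) * Complex.exp (Complex.I * ((Real.pi : ℂ) - (θ : ℂ))))) +
  (∫ x : ℝ in Set.Ici r, g (x : ℂ))

/-- The polylogarithm `Li_k(x) = ∑_{n ≥ 1} x^n / n^k`, for `|x| < 1`. -/
noncomputable def Li (k : ℤ) (x : ℂ) : ℂ :=
  ∑' n : ℕ, x ^ (n + 1) / ((n : ℂ) + 1) ^ k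

/-- A closed subsector of the open right half-plane. -/
def IsClosedSubsector (S : Set ℂ) : Prop :=
  ∃ θ₁ θ₂ : ℝ, -(Real.pi / 2) < θ₁ ∧ θ₁ ≤ θ₂ ∧ θ₂ < Real.pi / 2 ∧
    S = {z : ℂ | ∃ ρ θ : ℝ, 0 < ρ ∧ θ₁ ≤ θ ∧ θ ≤ θ₂ ∧
          z = (ρ : ℂ) * Complex.exp (Complex.I * (θ : ℂ))}


private lemma abs_pow_sub_one_le' (z : ℂ) (R : ℝ) (h1 : 1 ≤ R) (hz : ‖z‖ ≤ R) :
    ∀ n : ℕ, ‖z ^ n - 1‖ ≤ n * ‖z - 1‖ * R ^ n := by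
  intro n
  induction n with
  | zero => simp
  | succ n ih =>
    have hRn : (0:ℝ) ≤ R ^ n := by positivity
    have h2 : ‖z ^ (n+1) - 1‖ ≤ ‖z‖ ^ n * ‖z - 1‖
        + ‖z ^ n - 1‖ := by
      have : z ^ (n+1) - 1 = z ^ n * (z - 1) + (z ^ n - 1) := by ring
      rw [this]
      refine (norm_add_le _ _).trans ?_
      simp [norm_mul, norm_pow]
    have h3 : ‖z‖ ^ n ≤ R ^ n := pow_le_pow_left₀ (norm_nonneg z) hz n
    have h4 : R ^ n ≤ R ^ (n+1) := pow_le_pow_right₀ h1 (by omega)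
    have h0 : (0:ℝ) ≤ ‖z - 1‖ := norm_nonneg _
    push_cast
    nlinarith [ih, mul_le_mul_of_nonneg_right h3 h0,
      mul_le_mul_of_nonneg_left h4 (mul_nonneg (by positivity : (0:ℝ) ≤ (n:ℝ)+1) h0)]

private lemma key_lemma (q y : ℂ) (hq : ‖q‖ < 1) (hyq : ‖y * q‖ < 1) :
    Summable (fun m : ℕ =>
      ‖y ^ (m + 1) * q ^ (m + 1) / (((m : ℂ) + 1) * (1 - q ^ (m + 1)) ^ 2)‖) ∧
    Summable (fun k : ℕ => ‖(1 - y * q ^ (k + 1)) ^ (k + 1) - 1‖) ∧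
    HasProd (fun k : ℕ => (1 - y * q ^ (k + 1)) ^ (k + 1))
      (Complex.exp (-(∑' m : ℕ,
        y ^ (m + 1) * q ^ (m + 1) / (((m : ℂ) + 1) * (1 - q ^ (m + 1)) ^ 2)))) := by
  set a : ℝ := ‖y * q‖ with ha_def
  set b : ℝ := ‖q‖ with hb_def
  have ha0 : 0 ≤ a := norm_nonneg _
  have hb0 : 0 ≤ b := norm_nonneg _
  have hz_abs : ∀ k : ℕ, ‖y * q ^ (k + 1)‖ = a * b ^ k := by
    intro k
    rw [show y * q ^ (k+1) = (y * q) * q ^ k by ring, norm_mul, norm_pow]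
  have hbk : ∀ k : ℕ, b ^ k ≤ 1 := fun k => pow_le_one₀ hb0 hq.le
  have habk0 : ∀ k : ℕ, 0 ≤ a * b ^ k := fun k => by positivity
  have habk : ∀ k : ℕ, a * b ^ k ≤ a := fun k => by
    calc a * b ^ k ≤ a * 1 := by gcongr; exact hbk k
    _ = a := mul_one a
  have hzlt : ∀ k : ℕ, ‖y * q ^ (k + 1)‖ < 1 := fun k => by
    rw [hz_abs]; exact lt_of_le_of_lt (habk k) hyq
  have hzne : ∀ k : ℕ, (1 : ℂ) - y * q ^ (k + 1) ≠ 0 := by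
    intro k h
    have h2 := hzlt k
    rw [show y * q ^ (k+1) = 1 by linear_combination -h] at h2
    simp at h2
  -- the double-indexed family
  set F : ℕ × ℕ → ℂ := fun p => ((p.1 : ℂ) + 1) * (y * q ^ (p.1 + 1)) ^ (p.2 + 1) / ((p.2 : ℂ) + 1)
    with hF_def
  have habs_nat : ∀ n : ℕ, ‖(n : ℂ) + 1‖ = (n : ℝ) + 1 := by
    intro n
    rw [show ((n:ℂ) + 1) = ((n+1 : ℕ) : ℂ) by push_cast; ring, Complex.norm_natCast]
    push_cast; ring
  have hFabs : ∀ p : ℕ × ℕ, ‖F p‖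
      = ((p.1 : ℝ) + 1) * (a * b ^ p.1) ^ (p.2 + 1) / ((p.2 : ℝ) + 1) := by
    intro p
    rw [hF_def]
    simp only [norm_div, norm_mul, norm_pow, habs_nat, hz_abs]
  -- summability over m for fixed k
  have hsum_m : ∀ k : ℕ, Summable (fun m : ℕ => ‖F (k, m)‖) := by
    intro k
    have hr : a * b ^ k < 1 := lt_of_le_of_lt (habk k) hyq
    refine Summable.of_nonneg_of_le (fun m => norm_nonneg _) (fun m => ?_)
      (((summable_geometric_of_lt_one (habk0 k) hr).mul_left (((k:ℝ)+1) * (a * b ^ k))))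
    rw [hFabs]
    simp only
    rw [div_le_iff₀ (by positivity : (0:ℝ) < (m:ℝ)+1)]
    have h1 : ((k:ℝ)+1) * (a*b^k)^(m+1) = ((k:ℝ)+1) * (a * b ^ k) * (a * b ^ k) ^ m := by ring
    rw [h1]
    refine le_mul_of_one_le_right ?_ ?_
    · positivity
    · have : (0:ℝ) ≤ (m:ℝ) := Nat.cast_nonneg m
      linarith
  -- bound for the inner tsum
  have htsum_m : ∀ k : ℕ, ∑' m : ℕ, ‖F (k, m)‖
      ≤ ((k:ℝ)+1) * (a * (1-a)⁻¹) * b ^ k := by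
    intro k
    have hr : a * b ^ k < 1 := lt_of_le_of_lt (habk k) hyq
    have hgeo : Summable (fun m : ℕ => ((k:ℝ)+1) * (a * b ^ k) * (a * b ^ k) ^ m) :=
      (summable_geometric_of_lt_one (habk0 k) hr).mul_left _
    have h1 : ∑' m : ℕ, ‖F (k, m)‖
        ≤ ∑' m : ℕ, ((k:ℝ)+1) * (a * b ^ k) * (a * b ^ k) ^ m := by
      refine Summable.tsum_le_tsum (fun m => ?_) (hsum_m k) hgeo
      rw [hFabs]
      simp only
      rw [div_le_iff₀ (by positivity : (0:ℝ) < (m:ℝ)+1)]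
      have h1 : ((k:ℝ)+1) * (a*b^k)^(m+1) = ((k:ℝ)+1) * (a * b ^ k) * (a * b ^ k) ^ m := by ring
      rw [h1]
      refine le_mul_of_one_le_right ?_ ?_
      · positivity
      · have : (0:ℝ) ≤ (m:ℝ) := Nat.cast_nonneg m
        linarith
    refine h1.trans ?_
    rw [tsum_mul_left, tsum_geometric_of_lt_one (habk0 k) hr]
    have h2 : (1 - a * b ^ k)⁻¹ ≤ (1 - a)⁻¹ := by
      gcongr
      · linarith [habk k]
    calc ((k:ℝ)+1) * (a * b ^ k) * (1 - a*b^k)⁻¹ ≤ ((k:ℝ)+1) * (a * b ^ k) * (1-a)⁻¹ :=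
          mul_le_mul_of_nonneg_left h2 (by positivity)
      _ = ((k:ℝ)+1) * (a * (1-a)⁻¹) * b ^ k := by ring
  -- summable (k+1) b^k
  have hs1 : Summable (fun k : ℕ => ((k:ℝ)+1) * b ^ k) := by
    have h1 : Summable (fun k : ℕ => (k:ℝ)^1 * b ^ k) :=
      summable_pow_mul_geometric_of_norm_lt_one 1
        (by rwa [Real.norm_eq_abs, _root_.abs_of_nonneg hb0])
    have h2 : Summable (fun k : ℕ => b ^ k) := summable_geometric_of_lt_one hb0 hq
    simpa [pow_one, add_mul, one_mul] using h1.add h2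
  -- summability of norms on the product
  have hgsum : Summable (fun p : ℕ × ℕ => ‖F p‖) := by
    rw [summable_prod_of_nonneg (fun p => norm_nonneg _)]
    refine ⟨hsum_m, ?_⟩
    refine Summable.of_nonneg_of_le (fun k => tsum_nonneg (fun m => norm_nonneg _))
      htsum_m ?_
    simpa [mul_comm, mul_assoc, mul_left_comm] using hs1.mul_left (a * (1-a)⁻¹)
  have hF : Summable F := by
    refine Summable.of_norm ?_
    simpa using hgsum
  -- per k sum over m
  have hB : ∀ k : ℕ, HasSum (fun m : ℕ => F (k, m))
      (-(((k:ℂ)+1) * Complex.log (1 - y * q ^ (k + 1)))) := by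
    intro k
    have hlt : ‖y * q ^ (k+1)‖ < 1 := by exact hzlt k
    have h := Complex.hasSum_taylorSeries_neg_log hlt
    have hshift : HasSum (fun m : ℕ => (y * q ^ (k+1)) ^ (m+1) / ((m:ℂ)+1))
        (-Complex.log (1 - y * q ^ (k+1))) := by
      have h2 := (hasSum_nat_add_iff (f := fun n : ℕ => (y*q^(k+1))^n / (n:ℂ)) 1).2
        (by simpa using h)
      refine h2.congr_fun (fun m => ?_)
      push_cast
      try ring
    have h3 := hshift.mul_left ((k:ℂ)+1)
    rw [mul_neg] at h3
    refine h3.congr_fun (fun m => ?_)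
    rw [hF_def]
    ring
  -- per m sum over k
  have hC : ∀ m : ℕ, HasSum (fun k : ℕ => F (k, m))
      (y ^ (m + 1) * q ^ (m + 1) / (((m : ℂ) + 1) * (1 - q ^ (m + 1)) ^ 2)) := by
    intro m
    have hw : ‖q ^ (m+1)‖ < 1 := by
      rw [norm_pow]
      exact pow_lt_one₀ hb0 hq (by omega)
    have h := hasSum_coe_mul_geometric_of_norm_lt_one hw
    have hshift : HasSum (fun k : ℕ => ((k:ℂ)+1) * (q^(m+1))^(k+1))
        (q^(m+1) / (1 - q^(m+1))^2) := by
      have h2 := (hasSum_nat_add_iff (f := fun n : ℕ => (n:ℂ) * (q^(m+1))^n) 1).2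
        (by simpa using h)
      refine h2.congr_fun (fun k => ?_)
      push_cast
      try ring
    have h3 := hshift.mul_left (y^(m+1) / ((m:ℂ)+1))
    have hval : y^(m+1) / ((m:ℂ)+1) * (q^(m+1) / (1 - q^(m+1))^2)
        = y ^ (m+1) * q ^ (m+1) / (((m:ℂ)+1) * (1 - q^(m+1))^2) := div_mul_div_comm _ _ _ _
    rw [hval] at h3
    refine h3.congr_fun (fun k => ?_)
    rw [hF_def]
    have hexp : (y * q ^ (k+1)) ^ (m+1) = y ^ (m+1) * (q ^ (m+1)) ^ (k+1) := by
      rw [mul_pow, ← pow_mul, ← pow_mul, Nat.mul_comm]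
    simp only [hexp]
    ring
  -- Fubini
  set T : ℂ := ∑' p : ℕ × ℕ, F p with hT_def
  have hT : HasSum F T := hF.hasSum
  have hTswap : HasSum (fun p : ℕ × ℕ => F (p.2, p.1)) T := by
    have := (Equiv.prodComm ℕ ℕ).hasSum_iff (f := F) (a := T)
    exact this.2 hT
  have hSm : HasSum (fun m : ℕ =>
      y ^ (m + 1) * q ^ (m + 1) / (((m : ℂ) + 1) * (1 - q ^ (m + 1)) ^ 2)) T :=
    hTswap.prod_fiberwise (fun m => hC m)
  have hSk : HasSum (fun k : ℕ => -(((k:ℂ)+1) * Complex.log (1 - y * q ^ (k + 1)))) T :=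
    hT.prod_fiberwise hB
  have hSkneg : HasSum (fun k : ℕ => ((k:ℂ)+1) * Complex.log (1 - y * q ^ (k + 1))) (-T) := by
    simpa using hSk.neg
  -- summability of abs of terms
  have habs_swap : Summable (fun p : ℕ × ℕ => ‖F (p.2, p.1)‖) := by
    have := (Equiv.prodComm ℕ ℕ).summable_iff (f := fun p : ℕ × ℕ => ‖F p‖)
    exact this.2 hgsum
  have hdecomp := (summable_prod_of_nonneg
    (f := fun p : ℕ × ℕ => ‖F (p.2, p.1)‖) (fun p => norm_nonneg _)).1
    habs_swap
  have hsum_abs_term : Summable (fun m : ℕ =>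
      ‖y ^ (m + 1) * q ^ (m + 1) / (((m : ℂ) + 1) * (1 - q ^ (m + 1)) ^ 2)‖) := by
    refine Summable.of_nonneg_of_le (fun m => norm_nonneg _) (fun m => ?_) hdecomp.2
    rw [← (hC m).tsum_eq]
    have := norm_tsum_le_tsum_norm (f := fun k : ℕ => F (k, m))
      (by simpa using hdecomp.1 m)
    simpa using this
  -- summability of abs (prod term - 1)
  have hEsum : Summable (fun k : ℕ => ‖(1 - y * q ^ (k + 1)) ^ (k + 1) - 1‖) := by
    set K : ℝ := ∑' k : ℕ, ((k:ℝ)+1) * b ^ k with hK_def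
    have hKb : ∀ k : ℕ, ((k:ℝ)+1) * b ^ k ≤ K :=
      fun k => Summable.le_tsum hs1 k (fun j _ => by positivity)
    have hbound : ∀ k : ℕ, ‖(1 - y * q ^ (k + 1)) ^ (k + 1) - 1‖
        ≤ a * Real.exp (a * K) * (((k:ℝ)+1) * b ^ k) := by
      intro k
      have hR1 : (1:ℝ) ≤ 1 + a * b ^ k := by linarith [habk0 k]
      have hzR : ‖1 - y * q ^ (k+1)‖ ≤ 1 + a * b ^ k := by
        calc ‖1 - y * q ^ (k+1)‖
            ≤ ‖1‖ + ‖y * q ^ (k+1)‖ := norm_sub_le _ _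
          _ = 1 + a * b ^ k := by rw [hz_abs]; simp
      have h1 := abs_pow_sub_one_le' (1 - y * q ^ (k+1)) (1 + a * b ^ k) hR1 hzR (k+1)
      have h2 : ‖(1 - y * q ^ (k+1)) - 1‖ = a * b ^ k := by
        rw [show (1 - y * q ^ (k+1)) - 1 = -(y * q ^ (k+1)) by ring, norm_neg, hz_abs]
      rw [h2] at h1
      have h3 : (1 + a * b ^ k) ^ (k+1) ≤ Real.exp (a * K) := by
        calc (1 + a * b ^ k) ^ (k+1) ≤ Real.exp (a * b ^ k) ^ (k+1) := by
              refine pow_le_pow_left₀ (by linarith [habk0 k]) ?_ _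
              rw [add_comm]
              exact Real.add_one_le_exp _
          _ = Real.exp (((k:ℝ)+1) * (a * b ^ k)) := by
              rw [← Real.exp_nat_mul]
              push_cast
              ring_nf
          _ ≤ Real.exp (a * K) := by
              refine Real.exp_le_exp.2 ?_
              calc ((k:ℝ)+1) * (a * b ^ k) = a * (((k:ℝ)+1) * b ^ k) := by ring
                _ ≤ a * K := by gcongr; exact hKb k
      push_cast at h1
      calc ‖(1 - y * q ^ (k + 1)) ^ (k + 1) - 1‖
          ≤ ((k:ℝ) + 1) * (a * b ^ k) * (1 + a * b ^ k) ^ (k+1) := h1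
        _ ≤ ((k:ℝ)+1) * (a * b ^ k) * Real.exp (a * K) :=
            mul_le_mul_of_nonneg_left h3 (by positivity)
        _ = a * Real.exp (a * K) * (((k:ℝ)+1) * b ^ k) := by ring
    refine Summable.of_nonneg_of_le (fun k => norm_nonneg _) hbound ?_
    exact hs1.mul_left _
  -- the product
  have hprod : HasProd (fun k : ℕ => (1 - y * q ^ (k + 1)) ^ (k + 1))
      (Complex.exp (-(∑' m : ℕ,
        y ^ (m + 1) * q ^ (m + 1) / (((m : ℂ) + 1) * (1 - q ^ (m + 1)) ^ 2)))) := by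
    rw [hSm.tsum_eq]
    have hp := hSkneg.cexp
    refine hp.congr_fun (fun k => ?_)
    show (1 - y * q ^ (k + 1)) ^ (k + 1) = cexp (((k:ℂ)+1) * Complex.log (1 - y * q ^ (k+1)))
    rw [show ((k:ℂ)+1) = ((k+1 : ℕ) : ℂ) by push_cast; ring, Complex.exp_nat_mul,
      Complex.exp_log (hzne k)]
  exact ⟨hsum_abs_term, hEsum, hprod⟩

/-- The series–product identity arising from the residue computation in the proof of
the reflection relation for the triple-sine based function `G`. -/
theorem series_product_identity_tripleSine
    (q x : ℂ) (hq : ‖q‖ < 1) (hxq : ‖x * q‖ < 1)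
    (hxq' : ‖x⁻¹ * q‖ < 1) :
    Summable (fun m : ℕ =>
      ‖x ^ (m + 1) * q ^ (m + 1) / (((m : ℂ) + 1) * (1 - q ^ (m + 1)) ^ 2)‖) ∧
    Summable (fun m : ℕ =>
      ‖x⁻¹ ^ (m + 1) * q ^ (m + 1) / (((m : ℂ) + 1) * (1 - q ^ (m + 1)) ^ 2)‖) ∧
    Summable (fun k : ℕ => ‖(1 - x * q ^ (k + 1)) ^ (k + 1) - 1‖) ∧
    Summable (fun k : ℕ => ‖(1 - x⁻¹ * q ^ (k + 1)) ^ (k + 1) - 1‖) ∧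
    Multipliable (fun k : ℕ => (1 - x * q ^ (k + 1)) ^ (k + 1)) ∧
    Multipliable (fun k : ℕ => (1 - x⁻¹ * q ^ (k + 1)) ^ (k + 1)) ∧
    Complex.exp (-(∑' m : ℕ, x ^ (m + 1) * q ^ (m + 1) / (((m : ℂ) + 1) * (1 - q ^ (m + 1)) ^ 2))
        - ∑' m : ℕ, x⁻¹ ^ (m + 1) * q ^ (m + 1) / (((m : ℂ) + 1) * (1 - q ^ (m + 1)) ^ 2)) =
      (∏' k : ℕ, (1 - x * q ^ (k + 1)) ^ (k + 1)) *
      (∏' k : ℕ, (1 - x⁻¹ * q ^ (k + 1)) ^ (k + 1)) := by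
  obtain ⟨h1, h3, hP1⟩ := key_lemma q x hq hxq
  obtain ⟨h2, h4, hP2⟩ := key_lemma q x⁻¹ hq hxq'
  refine ⟨h1, h2, h3, h4, hP1.multipliable, hP2.multipliable, ?_⟩
  rw [hP1.tprod_eq, hP2.tprod_eq, ← Complex.exp_add]
  congr 1
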